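/- Define a₁ = 2, η₁ = 1, and recursively: η_{k+1} is the unique number in (0, η_k) satisfying (2/(2+a_k))·log(η_k/η_{k+1}) − 1 + η_{k+1}/η_k = 0, and a_{k+1} = 2 − (η_{k+1}/η_k)(2+a_k). Then for every k ≥ 1, a_k ∈ (0,2] and η_k ∈ (0,1], and the recursion is well-defined: for a_k ∈ (0,2] the equation has a unique solution η_{k+1}/η_k ∈ (0,1), and a_{k+1} ∈ (0,2). -/

import Mathlib

open Filter Topology


noncomputable def Gfun (c : ℝ) : ℝ → ℝ := fun x => c * Real.log (1/x) - 1 + x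

lemma Gfun_eq (c : ℝ) : Gfun c = fun x => -c * Real.log x - 1 + x := by
  funext x; simp [Gfun, one_div, Real.log_inv]

lemma Gfun_hasDeriv (c : ℝ) {x : ℝ} (hx : x ≠ 0) :
    HasDerivAt (Gfun c) (-c * x⁻¹ + 1) x := by
  rw [Gfun_eq]
  exact (((Real.hasDerivAt_log hx).const_mul (-c)).sub_const 1).add (hasDerivAt_id x)

lemma Gfun_contOn (c : ℝ) {s : Set ℝ} (hs : ∀ x ∈ s, x ≠ 0) : ContinuousOn (Gfun c) s := by
  rw [Gfun_eq]
  exact ((continuousOn_const.mul (Real.continuousOn_log.mono hs)).sub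
    continuousOn_const).add continuousOn_id

lemma Gfun_anti (c : ℝ) (hc : 0 < c) : StrictAntiOn (Gfun c) (Set.Ioc 0 c) := by
  apply strictAntiOn_of_deriv_neg (convex_Ioc 0 c)
    (Gfun_contOn c (fun x hx => ne_of_gt hx.1))
  intro x hx
  rw [interior_Ioc] at hx
  rw [(Gfun_hasDeriv c (ne_of_gt hx.1)).deriv]
  have h1 : 1 < c * x⁻¹ := (one_lt_div hx.1).2 hx.2 |>.trans_eq (div_eq_mul_inv c x)  -- maybe
  linarith

lemma Gfun_mono (c : ℝ) (hc : 0 < c) : StrictMonoOn (Gfun c) (Set.Icc c 1) := by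
  apply strictMonoOn_of_deriv_pos (convex_Icc c 1)
    (Gfun_contOn c (fun x hx => ne_of_gt (lt_of_lt_of_le hc hx.1)))
  intro x hx
  rw [interior_Icc] at hx
  have hx0 : 0 < x := lt_trans hc hx.1
  rw [(Gfun_hasDeriv c (ne_of_gt hx0)).deriv]
  have h1 : c * x⁻¹ < 1 := by
    rw [← div_eq_mul_inv, div_lt_one hx0]; exact hx.1
  linarith

lemma Gfun_one (c : ℝ) : Gfun c 1 = 0 := by simp [Gfun]

lemma log_one_div_lt (c : ℝ) (hc0 : 0 < c) (hc1 : c < 1) : Real.log (1/c) < 1/c - 1 :=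
  Real.log_lt_sub_one_of_pos (by positivity) (by
    intro h; rw [div_eq_one_iff_eq (ne_of_gt hc0)] at h; linarith)

lemma Gfun_c_neg (c : ℝ) (hc0 : 0 < c) (hc1 : c < 1) : Gfun c c < 0 := by
  have h := log_one_div_lt c hc0 hc1
  have : c * Real.log (1/c) < c * (1/c - 1) := by
    exact mul_lt_mul_of_pos_left h hc0
  have hc' : c * (1/c) = 1 := mul_one_div_cancel (ne_of_gt hc0)
  simp only [Gfun]
  nlinarith

lemma Gfun_x0 (c : ℝ) (hc0 : 0 < c) (hc1 : c < 1) :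
    0 < Real.exp (-(2/c)) ∧ Real.exp (-(2/c)) < c ∧ 0 < Gfun c (Real.exp (-(2/c))) := by
  have he : (0:ℝ) < Real.exp (-(2/c)) := Real.exp_pos _
  refine ⟨he, ?_, ?_⟩
  · have hlog := log_one_div_lt c hc0 hc1
    have hlogc : Real.log c = -Real.log (1/c) := by
      rw [one_div, Real.log_inv, neg_neg]
    have : -(2/c) < Real.log c := by
      rw [hlogc]
      have h2 : (0:ℝ) < 1/c := by positivity
      have h3 : 2/c = 2*(1/c) := by ring
      linarith
    calc Real.exp (-(2/c)) < Real.exp (Real.log c) := Real.exp_lt_exp.2 this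
      _ = c := Real.exp_log hc0
  · have : Real.log (1 / Real.exp (-(2/c))) = 2/c := by
      rw [one_div, Real.log_inv, Real.log_exp, neg_neg]
    simp only [Gfun, this]
    have : c * (2/c) = 2 := by field_simp
    rw [this]; linarith

lemma root_spec (c : ℝ) (hc0 : 0 < c) (hc1 : c < 1) :
    ∃ x, (0 < x ∧ x < c ∧ Gfun c x = 0) ∧
      ∀ y, 0 < y → y < 1 → Gfun c y = 0 → y = x := by
  obtain ⟨he, hec, hGe⟩ := Gfun_x0 c hc0 hc1
  have hGc := Gfun_c_neg c hc0 hc1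
  -- IVT on [exp(-(2/c)), c]
  have hcont : ContinuousOn (Gfun c) (Set.Icc (Real.exp (-(2/c))) c) :=
    Gfun_contOn c (fun x hx => ne_of_gt (lt_of_lt_of_le he hx.1))
  have hsub := intermediate_value_Icc' (le_of_lt hec) hcont
  have h0mem : (0:ℝ) ∈ Set.Icc (Gfun c c) (Gfun c (Real.exp (-(2/c)))) :=
    ⟨le_of_lt hGc, le_of_lt hGe⟩
  obtain ⟨x, hxmem, hGx⟩ := hsub h0mem
  have hx0 : 0 < x := lt_of_lt_of_le he hxmem.1
  have hxc : x < c := lt_of_le_of_ne hxmem.2 (by rintro rfl; exact absurd hGx (ne_of_lt hGc))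
  refine ⟨x, ⟨hx0, hxc, hGx⟩, ?_⟩
  intro y hy0 hy1 hGy
  rcases lt_or_ge y c with hyc | hcy
  · exact (Gfun_anti c hc0).injOn ⟨hy0, le_of_lt hyc⟩ ⟨hx0, le_of_lt hxc⟩ (hGy.trans hGx.symm)
  · exfalso
    have := (Gfun_mono c hc0) ⟨hcy, le_of_lt hy1⟩ ⟨le_trans hcy (le_of_lt hy1), le_refl 1⟩ hy1
    rw [Gfun_one, hGy] at this
    exact lt_irrefl 0 this

noncomputable def rt (a : ℝ) : ℝ :=
  if h : 0 < 2/(2+a) ∧ 2/(2+a) < 1 then (root_spec _ h.1 h.2).choose else 1/2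

lemma cfacts (a : ℝ) (h1 : 0 < a) (h2 : a ≤ 2) : 0 < 2/(2+a) ∧ 2/(2+a) < 1 := by
  constructor
  · apply div_pos <;> linarith
  · rw [div_lt_one (by linarith)]; linarith

lemma rt_spec (a : ℝ) (h1 : 0 < a) (h2 : a ≤ 2) :
    (0 < rt a ∧ rt a < 2/(2+a) ∧ Gfun (2/(2+a)) (rt a) = 0) ∧
    ∀ y, 0 < y → y < 1 → Gfun (2/(2+a)) y = 0 → y = rt a := by
  have h := cfacts a h1 h2
  rw [rt, dif_pos h]
  exact (root_spec _ h.1 h.2).choose_spec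

noncomputable def pseq : ℕ → ℝ × ℝ
  | 0 => (2, 1)
  | n+1 => (2 - rt (pseq n).1 * (2 + (pseq n).1), (pseq n).2 * rt (pseq n).1)

lemma pseq_inv : ∀ n, (0 < (pseq n).1 ∧ (pseq n).1 ≤ 2) ∧ (0 < (pseq n).2 ∧ (pseq n).2 ≤ 1) := by
  intro n
  induction n with
  | zero => simp [pseq]
  | succ n ih =>
    obtain ⟨⟨ha0, ha2⟩, hb0, hb1⟩ := ih
    obtain ⟨⟨hr0, hrc, _⟩, _⟩ := rt_spec _ ha0 ha2
    have h2a : (0:ℝ) < 2 + (pseq n).1 := by linarith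
    have hrlt : rt (pseq n).1 * (2 + (pseq n).1) < 2 := by
      calc rt (pseq n).1 * (2 + (pseq n).1) < (2/(2+(pseq n).1)) * (2 + (pseq n).1) :=
            mul_lt_mul_of_pos_right hrc h2a
        _ = 2 := by field_simp
    have hr1 : rt (pseq n).1 < 1 := lt_trans hrc (cfacts _ ha0 ha2).2
    refine ⟨⟨by simp only [pseq]; linarith, by simp only [pseq]; nlinarith⟩,
      by simp only [pseq]; positivity, ?_⟩
    simp only [pseq]
    nlinarith

/-- The limit (`q = 1`) energy recurrence `a₁ = 2`, `η₁ = 1`,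
`(2/(2+aₖ)) log(ηₖ/η_{k+1}) − 1 + η_{k+1}/ηₖ = 0` with `η_{k+1} ∈ (0, ηₖ)`, and
`a_{k+1} = 2 − (η_{k+1}/ηₖ)(2+aₖ)` is well-defined: the sequences exist, satisfy
`aₖ ∈ (0,2]`, `ηₖ ∈ (0,1]`, the ratio `η_{k+1}/ηₖ ∈ (0,1)` is the unique root of
`(2/(2+aₖ)) log(1/x) − 1 + x = 0` in `(0,1)`, and `a_{k+1} ∈ (0,2)`. -/
theorem stmt14 :
    ∃ a η : ℕ → ℝ, a 1 = 2 ∧ η 1 = 1 ∧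
      (∀ k ≥ 1, (0 < a k ∧ a k ≤ 2) ∧ (0 < η k ∧ η k ≤ 1)) ∧
      (∀ k ≥ 1,
        (∃! x : ℝ, 0 < x ∧ x < 1 ∧
          (2 / (2 + a k)) * Real.log (1 / x) - 1 + x = 0) ∧
        0 < η (k + 1) ∧ η (k + 1) < η k ∧
        (2 / (2 + a k)) * Real.log (η k / η (k + 1)) - 1 + η (k + 1) / η k = 0 ∧
        a (k + 1) = 2 - (η (k + 1) / η k) * (2 + a k) ∧
        0 < a (k + 1) ∧ a (k + 1) < 2) := by
  refine ⟨fun n => (pseq (n-1)).1, fun n => (pseq (n-1)).2, rfl, rfl,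
    fun k _ => pseq_inv (k-1), ?_⟩
  intro k hk
  have hpred : k - 1 + 1 = k := Nat.succ_pred_eq_of_pos hk
  set n := k - 1 with hn
  simp only [Nat.add_sub_cancel]
  rw [← hpred, Nat.add_sub_cancel]
  obtain ⟨⟨ha0, ha2⟩, hb0, hb1⟩ := pseq_inv n
  obtain ⟨⟨hr0, hrc, hG⟩, huniq⟩ := rt_spec _ ha0 ha2
  have hr1 : rt (pseq n).1 < 1 := lt_trans hrc (cfacts _ ha0 ha2).2
  set a := (pseq n).1
  set b := (pseq n).2
  set r := rt a
  have hp1 : (pseq (n+1)).1 = 2 - r * (2 + a) := by simp [pseq]; rfl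
  have hp2 : (pseq (n+1)).2 = b * r := by simp [pseq]; rfl
  have h2a : (0:ℝ) < 2 + a := by linarith
  have hratio : (pseq (n+1)).2 / b = r := by
    rw [hp2, mul_div_assoc]; field_simp
  have hinv : b / (pseq (n+1)).2 = 1 / r := by
    rw [hp2]; field_simp
  have hrlt : r * (2 + a) < 2 := by
    calc r * (2 + a) < (2/(2+a)) * (2 + a) := mul_lt_mul_of_pos_right hrc h2a
      _ = 2 := by field_simp
  refine ⟨⟨r, ⟨hr0, hr1, hG⟩, fun y hy => huniq y hy.1 hy.2.1 hy.2.2⟩,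
    by rw [hp2]; positivity,
    by rw [hp2]; nlinarith,
    by rw [hinv, hratio]; exact hG,
    by rw [hratio, hp1],
    by rw [hp1]; linarith,
    by rw [hp1]; nlinarith⟩
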